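/- arXiv:1606.08434 — 2 statements merged into one kernel-verified Lean document; each statement's English description precedes it below -/
import Mathlib

section
/- Let n, p, q be natural numbers with n ≥ 1. Then ∑_{k=0}^{2n} (−1)^k · C(2n,k) · [C(p+k,k)·C(q+k,k)] / [C(p+2n,k)·C(q+2n,k)] · H_{p+k} = (1/2) · [C(p+n,n)·C(q+n,n)·C(1+p+q+2n,2n)] / [C(p+2n,2n)·C(q+2n,2n)·C(1+p+q+n,n)] · { H_p + H_{p+n} − H_{1+p+q+n} + H_{1+p+q+2n} }. -/
open Finset Polynomial

/-- Classical harmonic number `H_n = ∑_{k=1}^n 1/k`. -/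
noncomputable def harm (n : ℕ) : ℝ :=
  ∑ k ∈ Finset.range n, 1 / (k + 1)

/-- Rising product `P x m = (x+1)(x+2)⋯(x+m)`. -/
noncomputable def P (x : ℝ) (m : ℕ) : ℝ := ∏ j ∈ Finset.range m, (x + j + 1)

lemma P_zero (x : ℝ) : P x 0 = 1 := by simp [P]

lemma P_succ (x : ℝ) (m : ℕ) : P x (m + 1) = P x m * (x + m + 1) :=
  Finset.prod_range_succ _ _

lemma P_pos {x : ℝ} (hx : 0 ≤ x) (m : ℕ) : 0 < P x m :=
  Finset.prod_pos fun j _ => by positivity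

lemma P_factorial (p m : ℕ) : (((p + m).factorial : ℝ)) = (p.factorial : ℝ) * P p m := by
  induction m with
  | zero => simp [P_zero]
  | succ m ih =>
      have : p + (m + 1) = (p + m) + 1 := by omega
      rw [this, Nat.factorial_succ, P_succ]
      push_cast
      rw [ih]
      ring

lemma P_add (x : ℝ) (m l : ℕ) :
    P x (m + l) = P x m * ∏ j ∈ Finset.range l, (x + (m + j) + 1) := by
  rw [P, Finset.prod_range_add]
  push_cast
  rfl

/-- Alternating-sum reduction of the binomial order. -/
lemma altsum (m : ℕ) (a : ℕ → ℝ) :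
    ∑ k ∈ range (m + 2), (-1 : ℝ) ^ k * ((m + 1).choose k : ℝ) * a k
      = ∑ k ∈ range (m + 1), (-1 : ℝ) ^ k * (m.choose k : ℝ) * (a k - a (k + 1)) := by
  have h1 := Finset.sum_range_succ' (fun k => (-1 : ℝ) ^ k * ((m + 1).choose k : ℝ) * a k) (m + 1)
  have h2 := Finset.sum_range_succ' (fun k => (-1 : ℝ) ^ k * (m.choose k : ℝ) * a k) (m + 1)
  simp only [Nat.choose_zero_right, pow_zero, Nat.cast_one, one_mul, mul_one] at h1 h2
  have h3 : ∑ k ∈ range (m + 2), (-1 : ℝ) ^ k * (m.choose k : ℝ) * a k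
      = ∑ k ∈ range (m + 1), (-1 : ℝ) ^ k * (m.choose k : ℝ) * a k := by
    rw [Finset.sum_range_succ, Nat.choose_eq_zero_of_lt (Nat.lt_succ_self m)]
    simp
  have hsplit : ∑ k ∈ range (m + 1), (-1 : ℝ) ^ (k + 1) * ((m + 1).choose (k + 1) : ℝ) * a (k + 1)
      = ∑ k ∈ range (m + 1), (-((-1 : ℝ) ^ k * (m.choose k : ℝ) * a (k + 1))
          + (-1 : ℝ) ^ (k + 1) * (m.choose (k + 1) : ℝ) * a (k + 1)) := by
    refine Finset.sum_congr rfl fun k _ => ?_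
    rw [Nat.choose_succ_succ]
    push_cast
    ring
  rw [h1, hsplit, Finset.sum_add_distrib, add_assoc, ← h2, h3, ← Finset.sum_add_distrib]
  exact Finset.sum_congr rfl fun k _ => by ring

noncomputable def gfun (n : ℕ) (x y : ℝ) (k : ℕ) : ℝ :=
  (x + y + 2*n + 3) * (2*x + 2*y + 4*n + 5) * k * (-1:ℝ)^k * ((2*n).choose k : ℝ)
    * P x k * P y k * P x (2*n+1-k) * P y (2*n+1-k)

lemma perk (n k : ℕ) (hk : k ≤ 2*n) (x y : ℝ) :
    (x + y + n + 2) * ((-1:ℝ)^k * ((2*n).choose k : ℝ) *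
      ((P x k * P x (2*n+2-k) * P y k * P y (2*n+2-k)
        - P x (k+1) * P x (2*n+2-(k+1)) * P y (k+1) * P y (2*n+2-(k+1)))
        - (P x (k+1) * P x (2*n+2-(k+1)) * P y (k+1) * P y (2*n+2-(k+1))
           - P x (k+2) * P x (2*n+2-(k+2)) * P y (k+2) * P y (2*n+2-(k+2)))))
    = (2*(2*(n:ℝ)+1)*(x+n+1)*(y+n+1)*(x+y+2*n+2)*(x+y+2*n+3)) *
        ((-1:ℝ)^k * ((2*n).choose k : ℝ) * (P x k * P x (2*n-k) * P y k * P y (2*n-k)))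
      + (gfun n x y (k+1) - gfun n x y k) := by
  obtain ⟨m, hkm⟩ : ∃ m, 2*n - k = m ∧ k + m = 2*n := ⟨2*n - k, rfl, by omega⟩
  obtain ⟨hm1, hm2⟩ := hkm
  have e1 : 2*n+2-k = m+2 := by omega
  have e2 : 2*n+2-(k+1) = m+1 := by omega
  have e3 : 2*n+2-(k+2) = m := by omega
  have e4 : 2*n+1-k = m+1 := by omega
  have e5 : 2*n+1-(k+1) = m := by omega
  have hM : (m : ℝ) = 2*(n:ℝ) - k := by
    have := congrArg (Nat.cast : ℕ → ℝ) hm2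
    push_cast at this
    linarith
  have hB : ((2*n).choose (k+1) : ℝ) = ((2*n).choose k : ℝ) * (m:ℝ) / ((k:ℝ)+1) := by
    have h := Nat.choose_succ_right_eq (2*n) k
    rw [hm1] at h
    have := congrArg (Nat.cast : ℕ → ℝ) h
    push_cast at this
    field_simp
    linarith
  simp only [gfun, e1, e2, e3, e4, e5, hm1]
  have p2 : ∀ z : ℝ, P z (m+2) = P z m * (z + m + 1) * (z + m + 2) := fun z => by
    rw [show m+2 = (m+1)+1 from rfl, P_succ, P_succ]; push_cast; ring
  have p1 : ∀ z : ℝ, P z (m+1) = P z m * (z + m + 1) := fun z => P_succ z m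
  have q2 : ∀ z : ℝ, P z (k+2) = P z k * (z + k + 1) * (z + k + 2) := fun z => by
    rw [show k+2 = (k+1)+1 from rfl, P_succ, P_succ]; push_cast; ring
  have q1 : ∀ z : ℝ, P z (k+1) = P z k * (z + k + 1) := fun z => P_succ z k
  rw [p2 x, p2 y, q2 x, q2 y, q1 x, q1 y, p1 x, p1 y, hB, hM]
  have hk1 : ((k:ℝ)+1) ≠ 0 := by positivity
  push_cast
  field_simp
  ring

theorem star (n : ℕ) (x y : ℝ) (hx : 0 ≤ x) (hy : 0 ≤ y) :
    (n.factorial : ℝ) * ∑ k ∈ range (2*n+1), (-1:ℝ)^k * ((2*n).choose k : ℝ) *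
        (P x k * P x (2*n-k) * P y k * P y (2*n-k))
    = ((2*n).factorial : ℝ) * (P x n * P y n * ∏ j ∈ range n, (x + y + n + 2 + j)) := by
  induction n with
  | zero => simp [P]
  | succ n ih =>
    have hpos : (0:ℝ) < x + y + (n:ℝ) + 2 := by positivity
    have hne : (x + y + (n:ℝ) + 2) ≠ 0 := ne_of_gt hpos
    set a : ℕ → ℝ := fun k => P x k * P x (2*n+2-k) * P y k * P y (2*n+2-k) with ha
    -- recurrence
    have hrec : (x + y + (n:ℝ) + 2) * ∑ k ∈ range (2*n+3), (-1:ℝ)^k * ((2*n+2).choose k : ℝ) * a k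
        = (2*(2*(n:ℝ)+1)*(x+n+1)*(y+n+1)*(x+y+2*n+2)*(x+y+2*n+3)) *
            ∑ k ∈ range (2*n+1), (-1:ℝ)^k * ((2*n).choose k : ℝ) *
              (P x k * P x (2*n-k) * P y k * P y (2*n-k)) := by
      have h1 : ∑ k ∈ range (2*n+3), (-1:ℝ)^k * ((2*n+2).choose k : ℝ) * a k
          = ∑ k ∈ range (2*n+2), (-1:ℝ)^k * ((2*n+1).choose k : ℝ) * (a k - a (k+1)) := by
        have := altsum (2*n+1) a
        convert this using 3 <;> omega
      have h2 : ∑ k ∈ range (2*n+2), (-1:ℝ)^k * ((2*n+1).choose k : ℝ) * (a k - a (k+1))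
          = ∑ k ∈ range (2*n+1), (-1:ℝ)^k * ((2*n).choose k : ℝ) *
              ((a k - a (k+1)) - (a (k+1) - a (k+2))) :=
        altsum (2*n) (fun k => a k - a (k+1))
      rw [h1, h2, Finset.mul_sum]
      have h3 : ∀ k ∈ range (2*n+1),
          (x + y + (n:ℝ) + 2) * ((-1:ℝ)^k * ((2*n).choose k : ℝ) *
            ((a k - a (k+1)) - (a (k+1) - a (k+2))))
          = (2*(2*(n:ℝ)+1)*(x+n+1)*(y+n+1)*(x+y+2*n+2)*(x+y+2*n+3)) *
              ((-1:ℝ)^k * ((2*n).choose k : ℝ) * (P x k * P x (2*n-k) * P y k * P y (2*n-k)))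
            + (gfun n x y (k+1) - gfun n x y k) := by
        intro k hkmem
        have hk : k ≤ 2*n := by
          have := Finset.mem_range.mp hkmem; omega
        simpa [ha] using perk n k hk x y
      rw [Finset.sum_congr rfl h3, Finset.sum_add_distrib, Finset.sum_range_sub (gfun n x y)]
      have hg1 : gfun n x y (2*n+1) = 0 := by
        simp [gfun, Nat.choose_eq_zero_of_lt (Nat.lt_succ_self (2*n))]
      have hg0 : gfun n x y 0 = 0 := by simp [gfun]
      rw [hg1, hg0, ← Finset.mul_sum]
      ring
    -- normalize indices in the goal
    simp only [show 2*(n+1) = 2*n+2 from by ring]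
    -- product shift lemma
    have hB : (x + y + (n:ℝ) + 2) * ∏ j ∈ range (n+1), (x + y + (↑(n+1):ℝ) + 2 + j)
        = (∏ j ∈ range n, (x + y + (n:ℝ) + 2 + j)) * ((x+y+2*n+2)*(x+y+2*n+3)) := by
      have t0 : ∀ j : ℕ, x + y + (↑(n+1):ℝ) + 2 + (j:ℝ) = x + y + (n:ℝ) + 2 + (↑(j+1):ℝ) := by
        intro j; push_cast; ring
      have t1 : ∏ j ∈ range (n+1), (x + y + (↑(n+1):ℝ) + 2 + j)
          = ∏ j ∈ range (n+1), (x + y + (n:ℝ) + 2 + (↑(j+1):ℝ)) :=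
        Finset.prod_congr rfl fun j _ => t0 j
      have t2 := Finset.prod_range_succ' (fun j => (x + y + (n:ℝ) + 2 + j)) (n+1)
      -- t2 : ∏ j ∈ range (n+2), f j = (∏ j ∈ range (n+1), f (j+1)) * f 0
      have t3 : ∏ j ∈ range (n+2), (x + y + (n:ℝ) + 2 + (j:ℝ))
          = ((∏ j ∈ range n, (x + y + (n:ℝ) + 2 + (j:ℝ))) * (x + y + (n:ℝ) + 2 + n))
              * (x + y + (n:ℝ) + 2 + (↑(n+1):ℝ)) := by
        rw [Finset.prod_range_succ, Finset.prod_range_succ]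
      rw [t1]
      have t4 : ∏ j ∈ range (n+1), (x + y + (n:ℝ) + 2 + (↑(j+1):ℝ))
          = (∏ j ∈ range (n+2), (x + y + (n:ℝ) + 2 + (j:ℝ))) / (x + y + (n:ℝ) + 2) := by
        rw [t2]
        field_simp
        simp
      rw [t4, t3]
      push_cast
      field_simp
      ring
    -- now the multiplicative chase
    have key : (x + y + (n:ℝ) + 2) * (((n+1).factorial : ℝ) *
          ∑ k ∈ range (2*n+3), (-1:ℝ)^k * ((2*n+2).choose k : ℝ) * a k)
        = (x + y + (n:ℝ) + 2) * (((2*n+2).factorial : ℝ) *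
          (P x (n+1) * P y (n+1) * ∏ j ∈ range (n+1), (x + y + (↑(n+1):ℝ) + 2 + j))) := by
      calc (x + y + (n:ℝ) + 2) * (((n+1).factorial : ℝ) *
              ∑ k ∈ range (2*n+3), (-1:ℝ)^k * ((2*n+2).choose k : ℝ) * a k)
          = ((n+1).factorial : ℝ) * ((x + y + (n:ℝ) + 2) *
              ∑ k ∈ range (2*n+3), (-1:ℝ)^k * ((2*n+2).choose k : ℝ) * a k) := by ring
        _ = ((n+1).factorial : ℝ) * ((2*(2*(n:ℝ)+1)*(x+n+1)*(y+n+1)*(x+y+2*n+2)*(x+y+2*n+3)) *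
              ∑ k ∈ range (2*n+1), (-1:ℝ)^k * ((2*n).choose k : ℝ) *
                (P x k * P x (2*n-k) * P y k * P y (2*n-k))) := by rw [hrec]
        _ = ((n:ℝ)+1) * (2*(2*(n:ℝ)+1)*(x+n+1)*(y+n+1)*(x+y+2*n+2)*(x+y+2*n+3)) *
              ((n.factorial : ℝ) * ∑ k ∈ range (2*n+1), (-1:ℝ)^k * ((2*n).choose k : ℝ) *
                (P x k * P x (2*n-k) * P y k * P y (2*n-k))) := by
            rw [Nat.factorial_succ]; push_cast; ring
        _ = ((n:ℝ)+1) * (2*(2*(n:ℝ)+1)*(x+n+1)*(y+n+1)*(x+y+2*n+2)*(x+y+2*n+3)) *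
              (((2*n).factorial : ℝ) * (P x n * P y n * ∏ j ∈ range n, (x + y + n + 2 + j))) := by
            rw [ih]
        _ = (x + y + (n:ℝ) + 2) * (((2*n+2).factorial : ℝ) *
              (P x (n+1) * P y (n+1) * ∏ j ∈ range (n+1), (x + y + (↑(n+1):ℝ) + 2 + j))) := by
            have f1 : ((2*n+2).factorial : ℝ) = (2*(n:ℝ)+2) * (2*(n:ℝ)+1) * ((2*n).factorial : ℝ) := by
              rw [show 2*n+2 = (2*n+1)+1 from rfl, Nat.factorial_succ, Nat.factorial_succ]
              push_cast; ring
            rw [f1, P_succ, P_succ]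
            calc ((n:ℝ)+1) * (2*(2*(n:ℝ)+1)*(x+n+1)*(y+n+1)*(x+y+2*n+2)*(x+y+2*n+3)) *
                  (((2*n).factorial : ℝ) * (P x n * P y n * ∏ j ∈ range n, (x + y + n + 2 + j)))
                = ((n:ℝ)+1) * (2*(2*(n:ℝ)+1)) * ((2*n).factorial : ℝ) * (P x n * (x+n+1)) * (P y n * (y+n+1)) *
                    ((∏ j ∈ range n, (x + y + (n:ℝ) + 2 + j)) * ((x+y+2*n+2)*(x+y+2*n+3))) := by ring
              _ = ((n:ℝ)+1) * (2*(2*(n:ℝ)+1)) * ((2*n).factorial : ℝ) * (P x n * (x+n+1)) * (P y n * (y+n+1)) *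
                    ((x + y + (n:ℝ) + 2) * ∏ j ∈ range (n+1), (x + y + (↑(n+1):ℝ) + 2 + j)) := by rw [hB]
              _ = (x + y + (n:ℝ) + 2) * ((2*(n:ℝ)+2) * (2*(n:ℝ)+1) * ((2*n).factorial : ℝ) *
                    (P x n * (x + ↑n + 1) * (P y n * (y + ↑n + 1)) *
                      ∏ j ∈ range (n+1), (x + y + (↑(n+1):ℝ) + 2 + j))) := by ring
    exact mul_left_cancel₀ hne key

lemma harm_diff (p k : ℕ) : harm (p + k) - harm p = ∑ j ∈ range k, ((p:ℝ) + j + 1)⁻¹ := by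
  induction k with
  | zero => simp
  | succ k ih =>
      have : p + (k + 1) = (p + k) + 1 := by omega
      rw [this, harm, Finset.sum_range_succ, ← harm, Finset.sum_range_succ, ← ih]
      push_cast
      ring

lemma eval_deriv_prod (m : ℕ) (a : ℕ → ℝ) (x : ℝ) (h : ∀ j ∈ range m, x + a j ≠ 0) :
    Polynomial.eval x (Polynomial.derivative (∏ j ∈ range m, (X + C (a j))))
      = (∏ j ∈ range m, (x + a j)) * ∑ j ∈ range m, (x + a j)⁻¹ := by
  induction m with
  | zero => simp
  | succ m ih =>
      have h' : ∀ j ∈ range m, x + a j ≠ 0 := fun j hj =>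
        h j (Finset.mem_range.mpr (by exact lt_trans (Finset.mem_range.mp hj) (Nat.lt_succ_self m)))
      have hm : x + a m ≠ 0 := h m (Finset.mem_range.mpr (Nat.lt_succ_self m))
      rw [Finset.prod_range_succ, Polynomial.derivative_mul, Polynomial.eval_add,
        Polynomial.eval_mul, Polynomial.eval_mul, ih h']
      have hd : Polynomial.derivative (X + C (a m)) = 1 := by simp
      rw [hd, Polynomial.eval_one, mul_one]
      have he : Polynomial.eval x (X + C (a m)) = x + a m := by simp
      have hp : Polynomial.eval x (∏ j ∈ range m, (X + C (a j))) = ∏ j ∈ range m, (x + a j) := by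
        rw [Polynomial.eval_prod]
        exact Finset.prod_congr rfl fun j _ => by simp
      rw [he, hp, Finset.prod_range_succ, Finset.sum_range_succ]
      field_simp

lemma eval_P (x : ℝ) (m : ℕ) :
    Polynomial.eval x (∏ j ∈ range m, (X + C ((j:ℝ) + 1))) = P x m := by
  rw [Polynomial.eval_prod, P]
  exact Finset.prod_congr rfl fun j _ => by simp; ring

lemma eval_deriv_P (p m : ℕ) :
    Polynomial.eval (p:ℝ) (Polynomial.derivative (∏ j ∈ range m, (X + C ((j:ℝ) + 1))))
      = P (p:ℝ) m * (harm (p + m) - harm p) := by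
  rw [eval_deriv_prod m _ _ (fun j _ => by positivity), harm_diff]
  rw [P]
  congr 1
  · exact Finset.prod_congr rfl fun j _ => by ring
  · exact Finset.sum_congr rfl fun j _ => by ring_nf

noncomputable def Phi (m : ℕ) : Polynomial ℝ := ∏ j ∈ range m, (X + C ((j:ℝ) + 1))
noncomputable def Psi (n q : ℕ) : Polynomial ℝ := ∏ j ∈ range n, (X + C ((q:ℝ) + n + 2 + j))

lemma eval_Psi (n q : ℕ) (x : ℝ) :
    Polynomial.eval x (Psi n q) = ∏ j ∈ range n, (x + (q:ℝ) + n + 2 + j) := by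
  rw [Psi, Polynomial.eval_prod]
  exact Finset.prod_congr rfl fun j _ => by simp; ring

lemma eval_deriv_Psi (n p q : ℕ) :
    Polynomial.eval (p:ℝ) (Polynomial.derivative (Psi n q))
      = (∏ j ∈ range n, ((p:ℝ) + q + n + 2 + j)) * (harm (1+p+q+2*n) - harm (1+p+q+n)) := by
  rw [Psi, eval_deriv_prod n _ _ (fun j _ => by positivity)]
  congr 1
  · exact Finset.prod_congr rfl fun j _ => by ring
  · have h1 : ∑ j ∈ range n, ((p:ℝ) + ((q:ℝ) + n + 2 + j))⁻¹
        = ∑ j ∈ range n, ((↑(p+q+n+1) : ℝ) + j + 1)⁻¹ := by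
      refine Finset.sum_congr rfl fun j _ => ?_
      push_cast; ring_nf
    rw [h1, ← harm_diff]
    have e1 : (p+q+n+1) + n = 1+p+q+2*n := by omega
    have e2 : p+q+n+1 = 1+p+q+n := by omega
    rw [e1, e2]

lemma poly_eq (n q : ℕ) :
    C ((n.factorial : ℝ)) * ∑ k ∈ range (2*n+1),
        C ((-1:ℝ)^k * ((2*n).choose k : ℝ) * (P (q:ℝ) k * P (q:ℝ) (2*n-k))) * (Phi k * Phi (2*n-k))
      = C (((2*n).factorial : ℝ) * P (q:ℝ) n) * (Phi n * Psi n q) := by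
  apply Polynomial.eq_of_infinite_eval_eq
  apply Set.Infinite.mono ?_ (Set.Ici_infinite (0:ℝ))
  intro x hx
  have hx0 : (0:ℝ) ≤ x := hx
  simp only [Set.mem_setOf_eq, Polynomial.eval_mul, Polynomial.eval_C,
    Polynomial.eval_finset_sum, Phi, eval_P, eval_Psi]
  have hst := star n x (q:ℝ) hx0 (by positivity)
  calc (n.factorial : ℝ) * ∑ k ∈ range (2*n+1),
          (-1:ℝ)^k * ((2*n).choose k : ℝ) * (P (q:ℝ) k * P (q:ℝ) (2*n-k)) * (P x k * P x (2*n-k))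
      = (n.factorial : ℝ) * ∑ k ∈ range (2*n+1), (-1:ℝ)^k * ((2*n).choose k : ℝ) *
          (P x k * P x (2*n-k) * P (q:ℝ) k * P (q:ℝ) (2*n-k)) := by
        congr 1
        exact Finset.sum_congr rfl fun k _ => by ring
    _ = ((2*n).factorial : ℝ) * (P x n * P (q:ℝ) n * ∏ j ∈ range n, (x + (q:ℝ) + n + 2 + j)) := by
        rw [hst]
    _ = ((2*n).factorial : ℝ) * P (q:ℝ) n * (P x n * ∏ j ∈ range n, (x + (q:ℝ) + n + 2 + j)) := by
        ring

lemma Dsum (n p q : ℕ) :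
    (n.factorial : ℝ) * ∑ k ∈ range (2*n+1),
        (-1:ℝ)^k * ((2*n).choose k : ℝ) * (P (q:ℝ) k * P (q:ℝ) (2*n-k)) *
          ((P (p:ℝ) k * (harm (p+k) - harm p)) * P (p:ℝ) (2*n-k)
            + P (p:ℝ) k * (P (p:ℝ) (2*n-k) * (harm (p+(2*n-k)) - harm p)))
    = ((2*n).factorial : ℝ) * P (q:ℝ) n *
        ((P (p:ℝ) n * (harm (p+n) - harm p)) * (∏ j ∈ range n, ((p:ℝ) + q + n + 2 + j))
          + P (p:ℝ) n * ((∏ j ∈ range n, ((p:ℝ) + q + n + 2 + j)) *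
              (harm (1+p+q+2*n) - harm (1+p+q+n)))) := by
  have E := congrArg (fun f => Polynomial.eval (p:ℝ) (Polynomial.derivative f)) (poly_eq n q)
  simp only [Polynomial.derivative_C_mul, Polynomial.derivative_sum, Polynomial.derivative_mul,
    Polynomial.eval_mul, Polynomial.eval_add, Polynomial.eval_C, Polynomial.eval_finset_sum,
    Phi, eval_P, eval_deriv_P, eval_Psi, eval_deriv_Psi, Polynomial.derivative_C,
    Polynomial.eval_zero, zero_mul, mul_zero, add_zero, zero_add] at E
  exact E

lemma choose_P (p m : ℕ) : ((p + m).choose m : ℝ) * (m.factorial : ℝ) = P (p:ℝ) m := by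
  have h := Nat.choose_mul_factorial_mul_factorial (Nat.le_add_left m p)
  have h2 : p + m - m = p := by omega
  rw [h2] at h
  have := congrArg (Nat.cast : ℕ → ℝ) h
  push_cast at this
  rw [P_factorial p m] at this
  have hp : (p.factorial : ℝ) ≠ 0 := by
    exact_mod_cast Nat.factorial_ne_zero p
  refine mul_right_cancel₀ hp ?_
  linear_combination this

lemma choose_P2 (p m k : ℕ) (hk : k ≤ m) :
    ((p + m).choose k : ℝ) * (k.factorial : ℝ) * P (p:ℝ) (m - k) = P (p:ℝ) m := by
  have h := Nat.choose_mul_factorial_mul_factorial (show k ≤ p + m by omega)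
  have h2 : p + m - k = p + (m - k) := by omega
  rw [h2] at h
  have := congrArg (Nat.cast : ℕ → ℝ) h
  push_cast at this
  rw [P_factorial p (m - k), P_factorial p m] at this
  have hp : (p.factorial : ℝ) ≠ 0 := by exact_mod_cast Nat.factorial_ne_zero p
  refine mul_left_cancel₀ hp ?_
  linear_combination this

theorem stmt1 (n p q : ℕ) (hn : 1 ≤ n) :
    ∑ k ∈ Finset.range (2 * n + 1), (-1 : ℝ) ^ k * ((2 * n).choose k : ℝ) *
        (((p + k).choose k : ℝ) * ((q + k).choose k : ℝ)) /
        (((p + 2 * n).choose k : ℝ) * ((q + 2 * n).choose k : ℝ)) * harm (p + k)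
    = (1 / 2) *
        (((p + n).choose n : ℝ) * ((q + n).choose n : ℝ) *
          ((1 + p + q + 2 * n).choose (2 * n) : ℝ)) /
        (((p + 2 * n).choose (2 * n) : ℝ) * ((q + 2 * n).choose (2 * n) : ℝ) *
          ((1 + p + q + n).choose n : ℝ)) *
        (harm p + harm (p + n) - harm (1 + p + q + n) + harm (1 + p + q + 2 * n)) := by
  have hp0 : (0:ℝ) ≤ (p:ℝ) := Nat.cast_nonneg p
  have hq0 : (0:ℝ) ≤ (q:ℝ) := Nat.cast_nonneg q
  have hfn : ((n.factorial : ℝ)) ≠ 0 := by exact_mod_cast Nat.factorial_ne_zero n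
  have hf2n : (((2*n).factorial : ℝ)) ≠ 0 := by exact_mod_cast Nat.factorial_ne_zero (2*n)
  set t : ℕ → ℝ := fun k => (-1:ℝ)^k * ((2*n).choose k : ℝ) *
      (P (p:ℝ) k * P (p:ℝ) (2*n-k) * P (q:ℝ) k * P (q:ℝ) (2*n-k)) with ht
  set B : ℝ := ∏ j ∈ range n, ((p:ℝ) + q + n + 2 + j) with hBdef
  set Sp : ℝ := ∑ k ∈ range (2*n+1), t k with hSp
  set Sh : ℝ := ∑ k ∈ range (2*n+1), t k * harm (p+k) with hSh
  set PP : ℝ := P (p:ℝ) (2*n) * P (q:ℝ) (2*n) with hPP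
  have hPpos : ∀ m : ℕ, 0 < P (p:ℝ) m := fun m => P_pos hp0 m
  have hQpos : ∀ m : ℕ, 0 < P (q:ℝ) m := fun m => P_pos hq0 m
  have hPPne : PP ≠ 0 := ne_of_gt (mul_pos (hPpos _) (hQpos _))
  have star_pq := star n (p:ℝ) (q:ℝ) hp0 hq0
  -- star_pq : n! * Sp = (2n)! * (P p n * P q n * B)
  have star_pq' : (n.factorial : ℝ) * Sp
      = ((2*n).factorial : ℝ) * (P (p:ℝ) n * P (q:ℝ) n * B) := star_pq
  -- Step 1 : LHS = Sh / PP
  have step1 : ∑ k ∈ Finset.range (2 * n + 1), (-1 : ℝ) ^ k * ((2 * n).choose k : ℝ) *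
        (((p + k).choose k : ℝ) * ((q + k).choose k : ℝ)) /
        (((p + 2 * n).choose k : ℝ) * ((q + 2 * n).choose k : ℝ)) * harm (p + k)
      = Sh / PP := by
    rw [hSh, Finset.sum_div]
    refine Finset.sum_congr rfl fun k hk => ?_
    have hk2n : k ≤ 2*n := by have := Finset.mem_range.mp hk; omega
    have hfk : ((k.factorial : ℝ)) ≠ 0 := by exact_mod_cast Nat.factorial_ne_zero k
    have e1 : ((p+k).choose k : ℝ) = P (p:ℝ) k / (k.factorial : ℝ) := by
      rw [eq_div_iff hfk]; exact choose_P p k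
    have e1q : ((q+k).choose k : ℝ) = P (q:ℝ) k / (k.factorial : ℝ) := by
      rw [eq_div_iff hfk]; exact choose_P q k
    have e2 : ((p+2*n).choose k : ℝ) = P (p:ℝ) (2*n) / ((k.factorial : ℝ) * P (p:ℝ) (2*n-k)) := by
      rw [eq_div_iff (mul_ne_zero hfk (ne_of_gt (hPpos _)))]
      have := choose_P2 p (2*n) k hk2n
      linear_combination this
    have e2q : ((q+2*n).choose k : ℝ) = P (q:ℝ) (2*n) / ((k.factorial : ℝ) * P (q:ℝ) (2*n-k)) := by
      rw [eq_div_iff (mul_ne_zero hfk (ne_of_gt (hQpos _)))]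
      have := choose_P2 q (2*n) k hk2n
      linear_combination this
    rw [e1, e1q, e2, e2q, ht, hPP]
    have h1 := hPpos k; have h2 := hPpos (2*n-k); have h3 := hQpos k; have h4 := hQpos (2*n-k)
    have h5 := hPpos (2*n); have h6 := hQpos (2*n)
    field_simp
  -- symmetry of t
  have t_symm : ∀ k, k ≤ 2*n → t (2*n - k) = t k := by
    intro k hk
    have h1 : 2*n - (2*n - k) = k := by omega
    have hsign : (-1:ℝ)^(2*n-k) = (-1:ℝ)^k := by
      have hsq : (-1:ℝ)^k * (-1:ℝ)^k = 1 := by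
        rw [← pow_add, show k + k = 2*k from by ring, pow_mul]; norm_num
      have hmm : (-1:ℝ)^(2*n-k) * (-1:ℝ)^k = 1 := by
        rw [← pow_add, show 2*n-k + k = 2*n from by omega, pow_mul]; norm_num
      calc (-1:ℝ)^(2*n-k) = (-1:ℝ)^(2*n-k) * ((-1:ℝ)^k * (-1:ℝ)^k) := by rw [hsq, mul_one]
        _ = ((-1:ℝ)^(2*n-k) * (-1:ℝ)^k) * (-1:ℝ)^k := by ring
        _ = (-1:ℝ)^k := by rw [hmm, one_mul]
    have hch : ((2*n).choose (2*n - k)) = ((2*n).choose k) := Nat.choose_symm hk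
    simp only [ht, h1, hsign, hch]
    ring
  -- reflection
  have refl : Sh = ∑ k ∈ range (2*n+1), t k * harm (p + (2*n - k)) := by
    have h := Finset.sum_range_reflect (fun k => t k * harm (p+k)) (2*n+1)
    rw [hSh, ← h]
    refine Finset.sum_congr rfl fun k hk => ?_
    have hk2n : k ≤ 2*n := by have := Finset.mem_range.mp hk; omega
    have e : 2*n+1-1-k = 2*n-k := by omega
    simp only [e, t_symm k hk2n]
  -- Dsum in t-form
  have dsum' : (n.factorial:ℝ) * ∑ k ∈ range (2*n+1),
        t k * ((harm (p+k) - harm p) + (harm (p+(2*n-k)) - harm p))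
      = ((n.factorial:ℝ) * Sp) *
          ((harm (p+n) - harm p) + (harm (1+p+q+2*n) - harm (1+p+q+n))) := by
    have h := Dsum n p q
    have hl : ∑ k ∈ range (2*n+1),
        (-1:ℝ)^k * ((2*n).choose k : ℝ) * (P (q:ℝ) k * P (q:ℝ) (2*n-k)) *
          ((P (p:ℝ) k * (harm (p+k) - harm p)) * P (p:ℝ) (2*n-k)
            + P (p:ℝ) k * (P (p:ℝ) (2*n-k) * (harm (p+(2*n-k)) - harm p)))
        = ∑ k ∈ range (2*n+1),
        t k * ((harm (p+k) - harm p) + (harm (p+(2*n-k)) - harm p)) := by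
      refine Finset.sum_congr rfl fun k _ => ?_
      simp only [ht]
      ring
    rw [hl] at h
    rw [h, star_pq']
    ring
  -- 2 * Sh = Sp * bracket
  have hdk : ∑ k ∈ range (2*n+1),
        t k * ((harm (p+k) - harm p) + (harm (p+(2*n-k)) - harm p))
      = Sp * ((harm (p+n) - harm p) + (harm (1+p+q+2*n) - harm (1+p+q+n))) := by
    have := dsum'
    have h2 : (n.factorial:ℝ) * (Sp * ((harm (p+n) - harm p) + (harm (1+p+q+2*n) - harm (1+p+q+n))))
        = ((n.factorial:ℝ) * Sp) * ((harm (p+n) - harm p) + (harm (1+p+q+2*n) - harm (1+p+q+n))) := by ring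
    exact mul_left_cancel₀ hfn (by rw [this, h2])
  have two_sh : 2 * Sh
      = Sp * (harm p + harm (p + n) - harm (1 + p + q + n) + harm (1 + p + q + 2 * n)) := by
    have hcomb : 2 * Sh = (∑ k ∈ range (2*n+1),
        t k * ((harm (p+k) - harm p) + (harm (p+(2*n-k)) - harm p))) + 2 * harm p * Sp := by
      nth_rewrite 1 [two_mul]
      nth_rewrite 2 [refl]
      rw [hSh, hSp, ← Finset.sum_add_distrib, Finset.mul_sum, ← Finset.sum_add_distrib]
      refine Finset.sum_congr rfl fun k _ => by ring
    rw [hcomb, hdk]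
    ring
  -- coefficient identity
  have c1 : ((p+n).choose n : ℝ) = P (p:ℝ) n / (n.factorial : ℝ) := by
    rw [eq_div_iff hfn]; exact choose_P p n
  have c2 : ((q+n).choose n : ℝ) = P (q:ℝ) n / (n.factorial : ℝ) := by
    rw [eq_div_iff hfn]; exact choose_P q n
  have c3 : ((p+2*n).choose (2*n) : ℝ) = P (p:ℝ) (2*n) / ((2*n).factorial : ℝ) := by
    rw [eq_div_iff hf2n]; exact choose_P p (2*n)
  have c4 : ((q+2*n).choose (2*n) : ℝ) = P (q:ℝ) (2*n) / ((2*n).factorial : ℝ) := by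
    rw [eq_div_iff hf2n]; exact choose_P q (2*n)
  have hidx1 : 1+p+q+2*n = (p+q+1)+2*n := by omega
  have hidx2 : 1+p+q+n = (p+q+1)+n := by omega
  have c5 : ((1+p+q+2*n).choose (2*n) : ℝ) = P ((p+q+1 : ℕ):ℝ) (2*n) / ((2*n).factorial : ℝ) := by
    rw [hidx1, eq_div_iff hf2n]; exact choose_P (p+q+1) (2*n)
  have c6 : ((1+p+q+n).choose n : ℝ) = P ((p+q+1 : ℕ):ℝ) n / (n.factorial : ℝ) := by
    rw [hidx2, eq_div_iff hfn]; exact choose_P (p+q+1) n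
  have hsplit : P ((p+q+1 : ℕ):ℝ) (2*n) = P ((p+q+1 : ℕ):ℝ) n * B := by
    rw [show 2*n = n + n from by ring, P_add, hBdef]
    congr 1
    refine Finset.prod_congr rfl fun j _ => ?_
    push_cast
    ring
  have hRpos : (0:ℝ) < P ((p+q+1 : ℕ):ℝ) n := P_pos (Nat.cast_nonneg _) n
  have coeff : (((p + n).choose n : ℝ) * ((q + n).choose n : ℝ) *
          ((1 + p + q + 2 * n).choose (2 * n) : ℝ)) /
        (((p + 2 * n).choose (2 * n) : ℝ) * ((q + 2 * n).choose (2 * n) : ℝ) *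
          ((1 + p + q + n).choose n : ℝ))
      = Sp / PP := by
    rw [c1, c2, c3, c4, c5, c6]
    set R1 : ℝ := P ((p+q+1 : ℕ):ℝ) n with hR1
    set R2 : ℝ := P ((p+q+1 : ℕ):ℝ) (2*n) with hR2
    set Pp1 : ℝ := P (p:ℝ) n with hPp1
    set Pq1 : ℝ := P (q:ℝ) n with hPq1
    set Pp2 : ℝ := P (p:ℝ) (2*n) with hPp2
    set Pq2 : ℝ := P (q:ℝ) (2*n) with hPq2
    have hSpval : Sp = ((2*n).factorial : ℝ) * (Pp1 * Pq1 * B) / (n.factorial : ℝ) := by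
      rw [eq_div_iff hfn]; linear_combination star_pq'
    have hsplit' : R2 = R1 * B := hsplit
    have hR1ne : R1 ≠ 0 := ne_of_gt hRpos
    have hPp1ne : Pp1 ≠ 0 := ne_of_gt (hPpos n)
    have hPq1ne : Pq1 ≠ 0 := ne_of_gt (hQpos n)
    have hPp2ne : Pp2 ≠ 0 := ne_of_gt (hPpos (2*n))
    have hPq2ne : Pq2 ≠ 0 := ne_of_gt (hQpos (2*n))
    rw [hsplit', hSpval, hPP]
    field_simp
  -- conclude
  rw [step1, mul_div_assoc, coeff]
  rw [div_eq_iff hPPne]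
  field_simp
  linear_combination two_sh
end

section
/- For every positive integer n, ∑_{k=0}^{2n} (−1)^k / C(2n,k) · H_k^2 = (1+2n)/(2+2n) · { H_{1+2n}^2 − H_{1+2n}/(1+n) − H_{1+2n}^{(2)} + H_{1+n}^{(2)} }. -/
/-- Second-order harmonic number `H_n^{(2)} = ∑_{k=1}^n 1/k^2`. -/
noncomputable def harm2 (n : ℕ) : ℝ :=
  ∑ k ∈ Finset.range n, 1 / (k + 1) ^ 2

/-- Alternating second-order harmonic partial sums. -/
noncomputable def alt2 (n : ℕ) : ℝ :=
  ∑ k ∈ Finset.range n, (-1 : ℝ) ^ k / (k + 1) ^ 2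

lemma harm_succ (m : ℕ) : harm (m + 1) = harm m + 1 / (m + 1) := by
  simp [harm, Finset.sum_range_succ]

lemma harm2_succ (m : ℕ) : harm2 (m + 1) = harm2 m + 1 / (m + 1) ^ 2 := by
  simp [harm2, Finset.sum_range_succ]

lemma alt2_succ (m : ℕ) : alt2 (m + 1) = alt2 m + (-1 : ℝ) ^ m / (m + 1) ^ 2 := by
  simp [alt2, Finset.sum_range_succ]

lemma choose_ne_zero_real {N k : ℕ} (h : k ≤ N) : (N.choose k : ℝ) ≠ 0 := by
  exact_mod_cast Nat.choose_pos h |>.ne'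

/-- key recurrence for the choose ratio: `C(N,M+1) = C(N,M)*(N-M)/(M+1)`. -/
lemma choose_succ_real {N M : ℕ} (h : M < N) :
    (N.choose (M + 1) : ℝ) = (N.choose M : ℝ) * ((N : ℝ) - M) / ((M : ℝ) + 1) := by
  have hh := Nat.choose_succ_right_eq N M
  have hc : ((N.choose (M + 1) : ℕ) : ℝ) * ((M : ℝ) + 1) = (N.choose M : ℝ) * ((N : ℝ) - M) := by
    have := congrArg (Nat.cast : ℕ → ℝ) hh
    push_cast [Nat.cast_sub h.le] at this
    linarith
  field_simp
  linarith

lemma keyB (N : ℕ) : ∀ M : ℕ, M ≤ N →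
    ∑ k ∈ Finset.range (M + 1), (-1 : ℝ) ^ k / (N.choose k : ℝ)
      = ((N : ℝ) + 1) / ((N : ℝ) + 2)
        + (-1 : ℝ) ^ M * ((M : ℝ) + 1) / (((N : ℝ) + 2) * (N.choose M : ℝ)) := by
  intro M
  induction M with
  | zero =>
      intro _
      have h2 : ((N : ℝ) + 2) ≠ 0 := by positivity
      simp
      field_simp
      ring
  | succ M ih =>
      intro hM
      have hMN : M < N := Nat.lt_of_succ_le hM
      have h2 : ((N : ℝ) + 2) ≠ 0 := by positivity
      have hM1 : ((M : ℝ) + 1) ≠ 0 := by positivity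
      have hNM : ((N : ℝ) - M) ≠ 0 := by
        have : (M : ℝ) < N := by exact_mod_cast hMN
        linarith
      have hc1 : (N.choose M : ℝ) ≠ 0 := choose_ne_zero_real hMN.le
      rw [Finset.sum_range_succ, ih hMN.le, choose_succ_real hMN, pow_succ]
      push_cast
      field_simp
      ring

lemma keyA (N : ℕ) : ∀ M : ℕ, M ≤ N →
    ∑ k ∈ Finset.range (M + 1), (-1 : ℝ) ^ k / (N.choose k : ℝ) * (harm k) ^ 2
      + (1 / ((N : ℝ) + 2)) *
        ∑ k ∈ Finset.range M, (-1 : ℝ) ^ k / (((k : ℝ) + 1) * (N.choose k : ℝ))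
    = 2 * ((N : ℝ) + 1) / ((N : ℝ) + 2) ^ 3
      + ((-1 : ℝ) ^ M / (N.choose M : ℝ)) *
        (2 * ((M : ℝ) - (N : ℝ) - 1) / ((N : ℝ) + 2) ^ 3
          + 2 * ((N : ℝ) + 1 - (M : ℝ)) * harm M / ((N : ℝ) + 2) ^ 2
          + ((M : ℝ) + 1) * (harm M) ^ 2 / ((N : ℝ) + 2)) := by
  intro M
  induction M with
  | zero =>
      intro _
      have h2 : ((N : ℝ) + 2) ≠ 0 := by positivity
      simp [harm]
      field_simp
      ring
  | succ M ih =>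
      intro hM
      have hMN : M < N := Nat.lt_of_succ_le hM
      have h2 : ((N : ℝ) + 2) ≠ 0 := by positivity
      have hM1 : ((M : ℝ) + 1) ≠ 0 := by positivity
      have hNM : ((N : ℝ) - M) ≠ 0 := by
        have : (M : ℝ) < N := by exact_mod_cast hMN
        linarith
      have hc1 : (N.choose M : ℝ) ≠ 0 := choose_ne_zero_real hMN.le
      rw [Finset.sum_range_succ
          (f := fun k => (-1 : ℝ) ^ k / (N.choose k : ℝ) * (harm k) ^ 2) (n := M + 1),
        Finset.sum_range_succ
          (f := fun k => (-1 : ℝ) ^ k / (((k : ℝ) + 1) * (N.choose k : ℝ))) (n := M)]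
      set s := ∑ k ∈ Finset.range (M + 1), (-1 : ℝ) ^ k / (N.choose k : ℝ) * (harm k) ^ 2
        with hs_def
      set v := ∑ k ∈ Finset.range M, (-1 : ℝ) ^ k / (((k : ℝ) + 1) * (N.choose k : ℝ))
        with hv_def
      have hv := ih hMN.le
      have hs : s = 2 * ((N : ℝ) + 1) / ((N : ℝ) + 2) ^ 3
          + ((-1 : ℝ) ^ M / (N.choose M : ℝ)) *
            (2 * ((M : ℝ) - (N : ℝ) - 1) / ((N : ℝ) + 2) ^ 3
              + 2 * ((N : ℝ) + 1 - (M : ℝ)) * harm M / ((N : ℝ) + 2) ^ 2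
              + ((M : ℝ) + 1) * (harm M) ^ 2 / ((N : ℝ) + 2))
          - (1 / ((N : ℝ) + 2)) * v := by linarith
      rw [hs, choose_succ_real hMN, harm_succ, pow_succ]
      push_cast
      field_simp
      ring

lemma keyC : ∀ m : ℕ,
    ∑ k ∈ Finset.range (m + 1), (-1 : ℝ) ^ k / (((k : ℝ) + 1) * (m.choose k : ℝ))
      = ((m : ℝ) + 1) * (2 * alt2 (m + 1) - harm2 (m + 1)) := by
  intro m
  induction m with
  | zero =>
      simp [alt2, harm2]
      norm_num
  | succ m ih =>
      have hm1 : ((m : ℝ) + 1) ≠ 0 := by positivity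
      have hm2 : ((m : ℝ) + 2) ≠ 0 := by positivity
      rw [Finset.sum_range_succ]
      have step : ∀ k ∈ Finset.range (m + 1),
          (-1 : ℝ) ^ k / (((k : ℝ) + 1) * ((m + 1).choose k : ℝ))
            = (((m : ℝ) + 2) / ((m : ℝ) + 1)) *
                ((-1 : ℝ) ^ k / (((k : ℝ) + 1) * (m.choose k : ℝ)))
              - (1 / ((m : ℝ) + 1)) * ((-1 : ℝ) ^ k / (m.choose k : ℝ)) := by
        intro k hk
        have hkm : k ≤ m := Nat.lt_succ_iff.mp (Finset.mem_range.mp hk)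
        have hk1 : ((k : ℝ) + 1) ≠ 0 := by positivity
        have hck : (m.choose k : ℝ) ≠ 0 := choose_ne_zero_real hkm
        have hmk : ((m : ℝ) + 1 - (k : ℝ)) ≠ 0 := by
          have : (k : ℝ) ≤ m := by exact_mod_cast hkm
          linarith
        have h1 : (((m + 1).choose k : ℕ) : ℝ)
            = ((m : ℝ) + 1) * (m.choose k : ℝ) / ((m : ℝ) + 1 - (k : ℝ)) := by
          have hh := Nat.choose_mul_succ_eq m k
          have hcast : ((m.choose k : ℕ) : ℝ) * ((m : ℝ) + 1)
              = (((m + 1).choose k : ℕ) : ℝ) * ((m : ℝ) + 1 - (k : ℝ)) := by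
            have := congrArg (Nat.cast : ℕ → ℝ) hh
            push_cast [Nat.cast_sub (le_trans hkm (Nat.le_succ m))] at this
            linarith
          field_simp
          linarith
        rw [h1]
        field_simp
        ring
      rw [Finset.sum_congr rfl step, Finset.sum_sub_distrib, ← Finset.mul_sum, ← Finset.mul_sum,
        ih, keyB m m le_rfl]
      simp only [Nat.choose_self, Nat.cast_one]
      rw [alt2_succ (m + 1), harm2_succ (m + 1), alt2_succ m, harm2_succ m]
      push_cast
      rw [pow_succ]
      field_simp
      ring

lemma alt2_even : ∀ n : ℕ, alt2 (2 * n) = harm2 (2 * n) - harm2 n / 2 := by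
  intro n
  induction n with
  | zero => simp [alt2, harm2]
  | succ n ih =>
      have h1 : 2 * (n + 1) = (2 * n + 1) + 1 := by ring
      rw [h1, alt2_succ, harm2_succ, alt2_succ, harm2_succ, ih, harm2_succ]
      have hev : (-1 : ℝ) ^ (2 * n) = 1 := by rw [pow_mul]; norm_num
      simp only [pow_succ (-1 : ℝ) (2 * n), hev]
      push_cast
      have hn1 : (2 * (n : ℝ) + 2) ≠ 0 := by positivity
      have hn2 : (2 * (n : ℝ) + 1) ≠ 0 := by positivity
      have hn3 : ((n : ℝ) + 1) ≠ 0 := by positivity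
      field_simp
      ring

theorem stmt4 (n : ℕ) (hn : 0 < n) :
    ∑ k ∈ Finset.range (2 * n + 1), (-1 : ℝ) ^ k / ((2 * n).choose k : ℝ) * (harm k) ^ 2
    = ((1 + 2 * n : ℝ) / (2 + 2 * n)) *
        ((harm (1 + 2 * n)) ^ 2 - harm (1 + 2 * n) / (1 + n)
          - harm2 (1 + 2 * n) + harm2 (1 + n)) := by
  have hev : (-1 : ℝ) ^ (2 * n) = 1 := by rw [pow_mul]; norm_num
  have hA := keyA (2 * n) (2 * n) le_rfl
  have hC := keyC (2 * n)
  have hsplit := Finset.sum_range_succ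
    (f := fun k => (-1 : ℝ) ^ k / (((k : ℝ) + 1) * ((2 * n).choose k : ℝ))) (n := 2 * n)
  simp only [Nat.choose_self, Nat.cast_one, hev] at hA hC hsplit
  rw [alt2_succ, harm2_succ, hev, alt2_even n] at hC
  set S := ∑ k ∈ Finset.range (2 * n + 1),
    (-1 : ℝ) ^ k / ((2 * n).choose k : ℝ) * (harm k) ^ 2 with hS_def
  set V := ∑ k ∈ Finset.range (2 * n),
    (-1 : ℝ) ^ k / (((k : ℝ) + 1) * ((2 * n).choose k : ℝ)) with hV_def
  set W := ∑ k ∈ Finset.range (2 * n + 1),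
    (-1 : ℝ) ^ k / (((k : ℝ) + 1) * ((2 * n).choose k : ℝ)) with hW_def
  have h2n1 : ((2 * n : ℕ) : ℝ) + 1 ≠ 0 := by positivity
  have hV : V = W - 1 / (((2 * n : ℕ) : ℝ) + 1) := by
    rw [hsplit]; field_simp; ring
  have hS : S = 2 * (((2 * n : ℕ) : ℝ) + 1) / (((2 * n : ℕ) : ℝ) + 2) ^ 3
      + (2 * (((2 * n : ℕ) : ℝ) - ((2 * n : ℕ) : ℝ) - 1) / (((2 * n : ℕ) : ℝ) + 2) ^ 3
          + 2 * (((2 * n : ℕ) : ℝ) + 1 - ((2 * n : ℕ) : ℝ)) * harm (2 * n) / (((2 * n : ℕ) : ℝ) + 2) ^ 2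
          + (((2 * n : ℕ) : ℝ) + 1) * (harm (2 * n)) ^ 2 / (((2 * n : ℕ) : ℝ) + 2))
      - (1 / (((2 * n : ℕ) : ℝ) + 2)) * V := by
    rw [div_one, one_mul] at hA
    linarith
  rw [hS, hV, hC]
  rw [show 1 + 2 * n = 2 * n + 1 from by ring, show 1 + n = n + 1 from by ring,
    harm_succ, harm2_succ, harm2_succ]
  push_cast
  have a1 : 2 * (n : ℝ) + 1 ≠ 0 := by positivity
  have a2 : 2 * (n : ℝ) + 2 ≠ 0 := by positivity
  have a3 : (n : ℝ) + 1 ≠ 0 := by positivity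
  field_simp
  ring
end
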